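/- Let λ be a nonzero real number. For all real numbers a, b with b ≠ 0, the ℝ-linear map P on H_ss determined on the basis by P(1) = −λ, P(e₁) = λ + (λ(λ+a)/b) e₂ + (λ(λ+a)/b) e₃, P(e₂) = −b − b e₁ − (2λ+a) e₂ − (λ+a) e₃, P(e₃) = b + b e₁ + (λ+a) e₂ + a e₃ is a Rota-Baxter operator of weight λ on H_ss. (Under the identification e₁ = g, e₂ = ν, e₃ = gν, this is the operator (S8) of Ma et al. on the Sweedler algebra.) -/

import Mathlib

noncomputable section

/-- The split semi-quaternion algebra `H_ss`, realized as the quaternion algebra over `ℝ`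
with `e₁² = 1`, `e₂² = 0` (so that `e₃ = e₁e₂` satisfies `e₃² = 0`,
`e₁e₂ = e₃ = -e₂e₁`, `e₂e₃ = 0 = e₃e₂`, `e₃e₁ = -e₂ = -e₁e₃`). -/
abbrev Hss : Type := QuaternionAlgebra ℝ 1 0 0

/-- The basis element `e₁`. -/
def e1 : Hss := ⟨0, 1, 0, 0⟩

/-- The basis element `e₂`. -/
def e2 : Hss := ⟨0, 0, 1, 0⟩

/-- The basis element `e₃`. -/
def e3 : Hss := ⟨0, 0, 0, 1⟩

/-- `P` is a Rota-Baxter operator of weight `l` on `H_ss`. -/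
def IsRotaBaxter (l : ℝ) (P : Hss →ₗ[ℝ] Hss) : Prop :=
  ∀ x y : Hss, P x * P y = P (P x * y) + P (x * P y) + l • P (x * y)

set_option maxHeartbeats 2000000 in
lemma basis_decomp (x : Hss) : x = x.re • (1:Hss) + x.imI • e1 + x.imJ • e2 + x.imK • e3 := by
  ext <;> simp [e1, e2, e3]

set_option maxHeartbeats 2000000 in
theorem rb_nonzero_weight_S8 (l : ℝ) (hl : l ≠ 0) (a b : ℝ) (hb : b ≠ 0)
    (P : Hss →ₗ[ℝ] Hss)
    (h0 : P 1 = (-l) • (1 : Hss))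
    (h1 : P e1 = (l) • (1 : Hss) + (l*(l + a)/b) • e2 + (l*(l + a)/b) • e3)
    (h2 : P e2 = (-b) • (1 : Hss) - (b) • e1 - (2*l + a) • e2 - (l + a) • e3)
    (h3 : P e3 = (b) • (1 : Hss) + (b) • e1 + (l + a) • e2 + (a) • e3) :
    IsRotaBaxter l P := by
  have key : ∀ x : Hss, P x =
      ⟨-l*x.re + l*x.imI - b*x.imJ + b*x.imK,
       -b*x.imJ + b*x.imK,
       (l*(l+a)/b)*x.imI - (2*l+a)*x.imJ + (l+a)*x.imK,
       (l*(l+a)/b)*x.imI - (l+a)*x.imJ + a*x.imK⟩ := by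
    intro x
    conv_lhs => rw [basis_decomp x]
    simp only [map_add, map_smul, h0, h1, h2, h3]
    ext <;> simp [e1, e2, e3] <;> ring
  intro x y
  simp only [key]
  ext <;> simp only [QuaternionAlgebra.re_mul, QuaternionAlgebra.imI_mul,
    QuaternionAlgebra.imJ_mul, QuaternionAlgebra.imK_mul, QuaternionAlgebra.re_add,
    QuaternionAlgebra.imI_add, QuaternionAlgebra.imJ_add, QuaternionAlgebra.imK_add,
    QuaternionAlgebra.re_smul, QuaternionAlgebra.imI_smul, QuaternionAlgebra.imJ_smul,
    QuaternionAlgebra.imK_smul, smul_eq_mul] <;> field_simp <;> ring
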